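/- Let G(x) be a parametrized BWR-game and let τ₁ ≤ τ₂ both lie in the ergodicity interval I(G(x)). Let s_W* be an optimal White strategy in G(τ₂) and s_B* an optimal Black strategy in G(τ₁). Then the pair (s_W*, s_B*) is a saddle point (pair of optimal strategies) in G(x) for every x ∈ [τ₁, τ₂]. -/
import Mathlib


open Matrix Filter

section StochAux

variable {V : Type} [Fintype V]

lemma stoch_mulVec_le {P : Matrix V V ℝ} (h0 : ∀ v u, 0 ≤ P v u) {g h : V → ℝ}
    (hgh : ∀ u, g u ≤ h u) (v : V) : P.mulVec g v ≤ P.mulVec h v := by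
  simp only [Matrix.mulVec, dotProduct]
  exact Finset.sum_le_sum fun u _ => mul_le_mul_of_nonneg_left (hgh u) (h0 v u)

lemma stoch_mulVec_const {P : Matrix V V ℝ} (h1 : ∀ v, ∑ u, P v u = 1) (c : ℝ) :
    P.mulVec (fun _ => c) = fun _ => c := by
  funext v
  simp only [Matrix.mulVec, dotProduct]
  rw [← Finset.sum_mul, h1 v, one_mul]

lemma stoch_pow_entry_nonneg [DecidableEq V] {P : Matrix V V ℝ} (h0 : ∀ v u, 0 ≤ P v u) (t : ℕ) :
    ∀ v u, 0 ≤ (P ^ t) v u := by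
  induction t with
  | zero =>
      intro v u
      rw [pow_zero]
      by_cases h : v = u <;> simp [Matrix.one_apply, h]
  | succ t ih =>
      intro v u
      rw [pow_succ, Matrix.mul_apply]
      exact Finset.sum_nonneg fun k _ => mul_nonneg (ih v k) (h0 k u)

lemma stoch_pow_mulVec_const [DecidableEq V] {P : Matrix V V ℝ} (h1 : ∀ v, ∑ u, P v u = 1)
    (c : ℝ) (t : ℕ) : (P ^ t).mulVec (fun _ => c) = fun _ => c := by
  induction t with
  | zero => simp
  | succ t ih =>
      rw [pow_succ', ← Matrix.mulVec_mulVec, ih, stoch_mulVec_const h1]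

lemma stoch_pow_mulVec_abs_le [DecidableEq V] {P : Matrix V V ℝ} (h0 : ∀ v u, 0 ≤ P v u)
    (h1 : ∀ v, ∑ u, P v u = 1) {g : V → ℝ} {C : ℝ} (hg : ∀ u, |g u| ≤ C) (t : ℕ) (v : V) :
    |(P ^ t).mulVec g v| ≤ C := by
  have h0' := stoch_pow_entry_nonneg h0 t
  rw [abs_le]
  constructor
  · have := stoch_mulVec_le h0' (g := fun _ => -C) (h := g) (fun u => (abs_le.mp (hg u)).1) v
    rwa [stoch_pow_mulVec_const h1 (-C) t] at this
  · have := stoch_mulVec_le h0' (g := g) (h := fun _ => C) (fun u => (abs_le.mp (hg u)).2) v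
    rwa [stoch_pow_mulVec_const h1 C t] at this

end StochAux

/-- A BWR-game: finite digraph with no sinks, positions partitioned into
White (`player v = 0`), Black (`player v = 1`) and Random (`player v = 2`),
positive transition probabilities on arcs out of random positions summing to 1,
and local rewards on arcs. -/
structure BWR (V : Type) [Fintype V] [DecidableEq V] where
  succ : V → Finset V
  succ_nonempty : ∀ v, (succ v).Nonempty
  player : V → Fin 3
  p : V → V → ℝ
  p_mem : ∀ v u, player v = 2 → (u ∈ succ v ↔ 0 < p v u)
  p_zero : ∀ v u, player v = 2 → u ∉ succ v → p v u = 0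
  p_sum : ∀ v, player v = 2 → ∑ u ∈ succ v, p v u = 1
  r : V → V → ℝ

namespace BWR

variable {V : Type} [Fintype V] [DecidableEq V] (G : BWR V)

/-- A (pure stationary) situation is valid if it moves along arcs. -/
def Valid (s : V → V) : Prop := ∀ v, s v ∈ G.succ v

/-- Combine a White strategy and a Black strategy into one situation. -/
def combine (sW sB : V → V) : V → V := fun v => if G.player v = 0 then sW v else sB v

/-- Transition matrix of the Markov chain obtained by fixing situation `s`. -/
noncomputable def P (s : V → V) : Matrix V V ℝ :=
  Matrix.of fun v u => if G.player v = 2 then G.p v u else if s v = u then 1 else 0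

/-- Expected one-step reward under situation `s`. -/
noncomputable def rbar (s : V → V) : V → ℝ :=
  fun v => if G.player v = 2 then ∑ u ∈ G.succ v, G.p v u * G.r v u else G.r v (s v)

/-- Limiting mean payoff from initial position `v` under situation `s`. -/
noncomputable def payoff (s : V → V) (v : V) : ℝ :=
  Filter.liminf
    (fun T : ℕ => (∑ t ∈ Finset.range (T + 1), (G.P s ^ t).mulVec (G.rbar s)) v / (T + 1))
    Filter.atTop

/-- `μ` is the value function of the game: some saddle point in pure stationary
strategies realizes it uniformly. -/
def IsValue (μ : V → ℝ) : Prop :=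
  ∃ sW sB : V → V, G.Valid (G.combine sW sB) ∧
    (∀ v, μ v = G.payoff (G.combine sW sB) v) ∧
    (∀ sW' : V → V, G.Valid (G.combine sW' sB) → ∀ v, G.payoff (G.combine sW' sB) v ≤ μ v) ∧
    (∀ sB' : V → V, G.Valid (G.combine sW sB') → ∀ v, μ v ≤ G.payoff (G.combine sW sB') v)

/-- The local value `M̄[r](v)`. -/
noncomputable def mbar : V → ℝ := fun v =>
  if G.player v = 0 then (G.succ v).sup' (G.succ_nonempty v) (fun u => G.r v u)
  else if G.player v = 1 then (G.succ v).inf' (G.succ_nonempty v) (fun u => G.r v u)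
  else ∑ u ∈ G.succ v, G.p v u * G.r v u

/-- A locally optimal situation achieves the local value at every controlled position. -/
def LocallyOptimal (s : V → V) : Prop :=
  G.Valid s ∧ ∀ v, G.player v ≠ 2 → G.r v (s v) = G.mbar v


variable {V : Type} [Fintype V] [DecidableEq V]

lemma P_nonneg' (G : BWR V) (s : V → V) (v u : V) : 0 ≤ G.P s v u := by
  unfold BWR.P
  rw [Matrix.of_apply]
  split_ifs with h1 h2
  · by_cases hm : u ∈ G.succ v
    · exact le_of_lt ((G.p_mem v u h1).mp hm)
    · rw [G.p_zero v u h1 hm]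
  · exact zero_le_one
  · exact le_refl 0

lemma P_rowsum' (G : BWR V) (s : V → V) (v : V) : ∑ u, G.P s v u = 1 := by
  unfold BWR.P
  by_cases h : G.player v = 2
  · simp only [Matrix.of_apply, if_pos h]
    rw [← G.p_sum v h]
    exact (Finset.sum_subset (Finset.subset_univ _) (fun u _ hu => G.p_zero v u h hu)).symm
  · simp only [Matrix.of_apply, if_neg h]
    simp

/-- Payoff comparison between two games sharing the transition structure. -/
lemma payoff_le_payoff_add' (G₁ G₂ : BWR V) (s : V → V) (hP : G₁.P s = G₂.P s)
    (c : ℝ) (hc : 0 ≤ c) (hrb : ∀ u, G₁.rbar s u ≤ G₂.rbar s u + c) (v : V) :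
    G₁.payoff s v ≤ G₂.payoff s v + c := by
  classical
  set P := G₂.P s with hPdef
  have h0 : ∀ a b, 0 ≤ P a b := P_nonneg' G₂ s
  have h1 : ∀ a, ∑ b, P a b = 1 := P_rowsum' G₂ s
  -- a common bound on both reward vectors
  set C : ℝ := (∑ u, |G₁.rbar s u|) + (∑ u, |G₂.rbar s u|) with hCdef
  have hC1 : ∀ u, |G₁.rbar s u| ≤ C := by
    intro u
    have h₁ : |G₁.rbar s u| ≤ ∑ u, |G₁.rbar s u| :=
      Finset.single_le_sum (f := fun u => |G₁.rbar s u|) (fun i _ => abs_nonneg _)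
        (Finset.mem_univ u)
    have h₂ : (0:ℝ) ≤ ∑ u, |G₂.rbar s u| := Finset.sum_nonneg fun i _ => abs_nonneg _
    linarith
  have hC2 : ∀ u, |G₂.rbar s u| ≤ C := by
    intro u
    have h₁ : |G₂.rbar s u| ≤ ∑ u, |G₂.rbar s u| :=
      Finset.single_le_sum (f := fun u => |G₂.rbar s u|) (fun i _ => abs_nonneg _)
        (Finset.mem_univ u)
    have h₂ : (0:ℝ) ≤ ∑ u, |G₁.rbar s u| := Finset.sum_nonneg fun i _ => abs_nonneg _
    linarith
  unfold BWR.payoff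
  rw [hP]
  set f₁ : ℕ → ℝ := fun T =>
    (∑ t ∈ Finset.range (T + 1), (P ^ t).mulVec (G₁.rbar s)) v / (T + 1) with hf₁
  set f₂ : ℕ → ℝ := fun T =>
    (∑ t ∈ Finset.range (T + 1), (P ^ t).mulVec (G₂.rbar s)) v / (T + 1) with hf₂
  have habs : ∀ (g : V → ℝ), (∀ u, |g u| ≤ C) → ∀ T : ℕ,
      |(∑ t ∈ Finset.range (T + 1), (P ^ t).mulVec g) v / (T + 1)| ≤ C := by
    intro g hg T
    have hTpos : (0:ℝ) < (T:ℝ) + 1 := by positivity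
    rw [abs_div, abs_of_pos hTpos, div_le_iff₀ hTpos]
    calc |(∑ t ∈ Finset.range (T + 1), (P ^ t).mulVec g) v|
        = |∑ t ∈ Finset.range (T + 1), (P ^ t).mulVec g v| := by rw [Finset.sum_apply]
      _ ≤ ∑ t ∈ Finset.range (T + 1), |(P ^ t).mulVec g v| :=
          Finset.abs_sum_le_sum_abs _ _
      _ ≤ ∑ _t ∈ Finset.range (T + 1), C :=
          Finset.sum_le_sum fun t _ => stoch_pow_mulVec_abs_le h0 h1 hg t v
      _ = ((T:ℝ) + 1) * C := by
          rw [Finset.sum_const, Finset.card_range, nsmul_eq_mul]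
          push_cast; ring
      _ = C * ((T:ℝ) + 1) := by ring
  have hb1 := habs (G₁.rbar s) hC1
  have hb2 := habs (G₂.rbar s) hC2
  -- pointwise comparison
  have hpt : ∀ T : ℕ, f₁ T ≤ f₂ T + c := by
    intro T
    have hTpos : (0:ℝ) < (T:ℝ) + 1 := by positivity
    have hnum : (∑ t ∈ Finset.range (T + 1), (P ^ t).mulVec (G₁.rbar s)) v
        ≤ (∑ t ∈ Finset.range (T + 1), (P ^ t).mulVec (G₂.rbar s)) v + ((T:ℝ) + 1) * c := by
      rw [Finset.sum_apply, Finset.sum_apply]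
      have hterm : ∀ t ∈ Finset.range (T + 1),
          (P ^ t).mulVec (G₁.rbar s) v ≤ (P ^ t).mulVec (G₂.rbar s) v + c := by
        intro t _
        have heq : (fun u => G₂.rbar s u + c) = (G₂.rbar s) + (fun _ => c) := rfl
        have := stoch_mulVec_le (stoch_pow_entry_nonneg h0 t)
          (g := G₁.rbar s) (h := fun u => G₂.rbar s u + c) hrb v
        rwa [heq, Matrix.mulVec_add, Pi.add_apply,
          stoch_pow_mulVec_const h1 c t] at this
      calc ∑ t ∈ Finset.range (T + 1), (P ^ t).mulVec (G₁.rbar s) v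
          ≤ ∑ t ∈ Finset.range (T + 1), ((P ^ t).mulVec (G₂.rbar s) v + c) :=
            Finset.sum_le_sum hterm
        _ = ∑ t ∈ Finset.range (T + 1), (P ^ t).mulVec (G₂.rbar s) v + ((T:ℝ) + 1) * c := by
            rw [Finset.sum_add_distrib, Finset.sum_const, Finset.card_range, nsmul_eq_mul]
            push_cast; ring
    have hstep : f₁ T ≤ ((∑ t ∈ Finset.range (T + 1), (P ^ t).mulVec (G₂.rbar s)) v
        + ((T:ℝ) + 1) * c) / ((T:ℝ) + 1) := div_le_div_of_nonneg_right hnum hTpos.le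
    have heq2 : ((∑ t ∈ Finset.range (T + 1), (P ^ t).mulVec (G₂.rbar s)) v
        + ((T:ℝ) + 1) * c) / ((T:ℝ) + 1) = f₂ T + c := by
      rw [add_div, mul_comm, mul_div_assoc, div_self hTpos.ne', mul_one]
    rw [heq2] at hstep
    exact hstep
  -- boundedness facts
  have hbd1 : Filter.IsBoundedUnder (· ≥ ·) Filter.atTop f₁ :=
    Filter.isBoundedUnder_of ⟨-C, fun T => (abs_le.mp (hb1 T)).1⟩
  have hbd2lo : Filter.IsBoundedUnder (· ≥ ·) Filter.atTop f₂ :=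
    Filter.isBoundedUnder_of ⟨-C, fun T => (abs_le.mp (hb2 T)).1⟩
  have hbd2hi : Filter.IsBoundedUnder (· ≤ ·) Filter.atTop f₂ :=
    Filter.isBoundedUnder_of ⟨C, fun T => (abs_le.mp (hb2 T)).2⟩
  have hco2 : Filter.IsCoboundedUnder (· ≥ ·) Filter.atTop f₂ :=
    hbd2hi.isCoboundedUnder_ge
  have hco2' : Filter.IsCoboundedUnder (· ≥ ·) Filter.atTop (fun T => f₂ T + c) :=
    Filter.IsBoundedUnder.isCoboundedUnder_ge
      (Filter.isBoundedUnder_of ⟨C + c, fun T => add_le_add (abs_le.mp (hb2 T)).2 le_rfl⟩)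
  have hli : Filter.liminf f₁ Filter.atTop ≤ Filter.liminf (fun T => f₂ T + c) Filter.atTop :=
    Filter.liminf_le_liminf (Filter.Eventually.of_forall hpt) hbd1 hco2'
  rwa [liminf_add_const Filter.atTop f₂ c hco2 hbd2lo] at hli


end BWR

/-- Let `G(x)` be a parametrized BWR-game and `τ₁ ≤ τ₂` two
points of its ergodicity interval (so `G(τᵢ)` is ergodic with value `τᵢ`
everywhere). If `sW*` is an optimal White strategy in `G(τ₂)` and `sB*` an
optimal Black strategy in `G(τ₁)`, then `(sW*, sB*)` is a saddle point of
`G(x)` for every `x ∈ [τ₁, τ₂]`. -/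
theorem parametrized_BWR_interval_saddle_point
    {V : Type} [Fintype V] [DecidableEq V]
    (G : ℝ → BWR V) (w : V)
    (hsucc : ∀ x y, (G x).succ = (G y).succ)
    (hplayer : ∀ x y, (G x).player = (G y).player)
    (hp : ∀ x y, (G x).p = (G y).p)
    (hwdet : ∀ x, (G x).player w ≠ 2)
    (hw : ∀ x, (G x).succ w = {w})
    (hwr : ∀ x, (G x).r w w = x)
    (hr : ∀ x y v u, ¬(v = w ∧ u = w) → (G x).r v u = (G y).r v u)
    (τ₁ τ₂ : ℝ) (hτ : τ₁ ≤ τ₂)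
    -- G(τ₁) and G(τ₂) are ergodic, with (constant) values τ₁ and τ₂ respectively
    (herg₁ : ∃ μ : V → ℝ, (G τ₁).IsValue μ ∧ ∀ v, μ v = τ₁)
    (herg₂ : ∃ μ : V → ℝ, (G τ₂).IsValue μ ∧ ∀ v, μ v = τ₂)
    (sWs sBs : V → V)
    (hvalid : ∀ x, (G x).Valid ((G x).combine sWs sBs))
    -- sW* is optimal for White in G(τ₂)
    (hWopt : ∀ sB : V → V, (G τ₂).Valid ((G τ₂).combine sWs sB) →
      ∀ v, τ₂ ≤ (G τ₂).payoff ((G τ₂).combine sWs sB) v)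
    -- sB* is optimal for Black in G(τ₁)
    (hBopt : ∀ sW : V → V, (G τ₁).Valid ((G τ₁).combine sW sBs) →
      ∀ v, (G τ₁).payoff ((G τ₁).combine sW sBs) v ≤ τ₁) :
    ∀ x ∈ Set.Icc τ₁ τ₂, ∀ v : V,
      (∀ sW : V → V, (G x).Valid ((G x).combine sW sBs) →
        (G x).payoff ((G x).combine sW sBs) v ≤ (G x).payoff ((G x).combine sWs sBs) v) ∧
      (∀ sB : V → V, (G x).Valid ((G x).combine sWs sB) →
        (G x).payoff ((G x).combine sWs sBs) v ≤ (G x).payoff ((G x).combine sWs sB) v) := by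
  -- the combined situation does not depend on the parameter
  have hcomb : ∀ x y : ℝ, ∀ a b : V → V, (G x).combine a b = (G y).combine a b := by
    intro x y a b
    funext u
    unfold BWR.combine
    rw [hplayer x y]
  have hPeq : ∀ x y : ℝ, ∀ s : V → V, (G x).P s = (G y).P s := by
    intro x y s
    unfold BWR.P
    rw [hplayer x y, hp x y]
  have hValid : ∀ x y : ℝ, ∀ s : V → V, (G x).Valid s → (G y).Valid s := by
    intro x y s hs u
    rw [← hsucc x y]
    exact hs u
  have hsw : ∀ x : ℝ, ∀ s : V → V, (G x).Valid s → s w = w := by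
    intro x s hs
    have := hs w
    rw [hw x, Finset.mem_singleton] at this
    exact this
  -- the reward vectors differ only at `w`
  have hrbar : ∀ x y : ℝ, ∀ s : V → V, s w = w → ∀ u,
      (G x).rbar s u = (G y).rbar s u + (if u = w then x - y else 0) := by
    intro x y s hsww u
    by_cases huw : u = w
    · subst huw
      unfold BWR.rbar
      rw [if_neg (hwdet x), if_neg (hwdet y), hsww, hwr x, hwr y]
      simp
    · unfold BWR.rbar
      rw [if_neg huw, add_zero, hplayer x y]
      by_cases hpl : (G y).player u = 2
      · rw [if_pos hpl, if_pos hpl, hsucc x y, hp x y]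
        refine Finset.sum_congr rfl fun a _ => ?_
        rw [hr x y u a (fun h => huw h.1)]
      · rw [if_neg hpl, if_neg hpl, hr x y u (s u) (fun h => huw h.1)]
  -- transfer of payoffs between parameters
  have key : ∀ x y : ℝ, y ≤ x → ∀ s : V → V, s w = w → ∀ v : V,
      (G x).payoff s v ≤ (G y).payoff s v + (x - y) := by
    intro x y hyx s hsww v
    refine BWR.payoff_le_payoff_add' (G x) (G y) s (hPeq x y s) (x - y)
      (sub_nonneg.mpr hyx) (fun u => ?_) v
    rw [hrbar x y s hsww u]
    have : (if u = w then x - y else 0) ≤ x - y := by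
      split_ifs
      · exact le_rfl
      · exact sub_nonneg.mpr hyx
    linarith
  intro x hx v
  obtain ⟨hx1, hx2⟩ := hx
  -- an upper bound: White cannot get more than x against sBs
  have upper : ∀ sW : V → V, (G x).Valid ((G x).combine sW sBs) →
      (G x).payoff ((G x).combine sW sBs) v ≤ x := by
    intro sW hv
    set s := (G x).combine sW sBs with hs
    have hsww : s w = w := hsw x s hv
    have h1 : (G x).payoff s v ≤ (G τ₁).payoff s v + (x - τ₁) := key x τ₁ hx1 s hsww v
    have h2 : (G τ₁).payoff s v ≤ τ₁ := by
      have hval₁ : (G τ₁).Valid ((G τ₁).combine sW sBs) := by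
        rw [hcomb τ₁ x sW sBs, ← hs]
        exact hValid x τ₁ s hv
      have := hBopt sW hval₁ v
      rwa [hcomb τ₁ x sW sBs, ← hs] at this
    linarith
  -- a lower bound: Black cannot pay less than x against sWs
  have lower : ∀ sB : V → V, (G x).Valid ((G x).combine sWs sB) →
      x ≤ (G x).payoff ((G x).combine sWs sB) v := by
    intro sB hv
    set s := (G x).combine sWs sB with hs
    have hsww : s w = w := hsw x s hv
    have h1 : (G τ₂).payoff s v ≤ (G x).payoff s v + (τ₂ - x) := key τ₂ x hx2 s hsww v
    have h2 : τ₂ ≤ (G τ₂).payoff s v := by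
      have hval₂ : (G τ₂).Valid ((G τ₂).combine sWs sB) := by
        rw [hcomb τ₂ x sWs sB, ← hs]
        exact hValid x τ₂ s hv
      have := hWopt sB hval₂ v
      rwa [hcomb τ₂ x sWs sB, ← hs] at this
    linarith
  refine ⟨fun sW hv => ?_, fun sB hv => ?_⟩
  · exact le_trans (upper sW hv) (lower sBs (hvalid x))
  · exact le_trans (upper sWs (hvalid x)) (lower sB hv)
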